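/- arXiv:2507.13024 — 4 statements merged into one kernel-verified Lean document; each statement's English description precedes it below -/
import Mathlib

section
/- For all real numbers t, a, μ and all σ > 0, the integral of the function x ↦ Φ(t + a·x) against the Gaussian density with mean μ and variance σ², i.e. ∫_ℝ Φ(t + a·x) · (1/(σ√(2π))) · exp(−(x − μ)²/(2σ²)) dx, equals Φ((t + a·μ)/√(1 + a²σ²)). -/
open MeasureTheory ProbabilityTheory Real
open Set

/-- The standard normal CDF `Φ(t) = (2π)^{-1/2} ∫_{-∞}^t e^{-s²/2} ds`. -/
noncomputable def stdNormalCDF (t : ℝ) : ℝ :=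
  ∫ s in Set.Iic t, Real.exp (-s ^ 2 / 2) / Real.sqrt (2 * Real.pi)

lemma gauss_shift (k c : ℝ) : ∫ x : ℝ, Real.exp (-k * (x - c)^2) = Real.sqrt (Real.pi / k) := by
  rw [integral_sub_right_eq_self (fun x => Real.exp (-k * x ^ 2)) c]
  exact integral_gaussian k

lemma iic_shift (f : ℝ → ℝ) (c t : ℝ) : ∫ s in Iic (t + c), f s = ∫ u in Iic t, f (u + c) := by
  have h := (measurePreserving_add_right (volume : Measure ℝ) c).setIntegral_preimage_emb
    (MeasurableEquiv.addRight c).measurableEmbedding f (Iic (t + c))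
  rw [← h]
  congr 1
  ext u
  simp [sub_le_iff_le_add]

lemma inner_gauss (a μ σ u : ℝ) (hσ : 0 < σ) :
    ∫ x : ℝ, (1 / (σ * Real.sqrt (2 * π)) * Real.exp (-(x - μ) ^ 2 / (2 * σ ^ 2))) *
      (Real.exp (-(u + a * x) ^ 2 / 2) / Real.sqrt (2 * π)) =
    Real.exp (-(u + a * μ) ^ 2 / (2 * (1 + a ^ 2 * σ ^ 2))) /
      (Real.sqrt (2 * π) * Real.sqrt (1 + a ^ 2 * σ ^ 2)) := by
  have hπ : (0:ℝ) < 2 * π := by positivity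
  have hb2 : (0:ℝ) < 1 + a ^ 2 * σ ^ 2 := by positivity
  have hS : Real.sqrt (2 * π) * Real.sqrt (2 * π) = 2 * π := Real.mul_self_sqrt hπ.le
  set k0 : ℝ := (1 + a ^ 2 * σ ^ 2) / (2 * σ ^ 2) with hk0
  set c : ℝ := (μ - a * u * σ ^ 2) / (1 + a ^ 2 * σ ^ 2) with hc
  set B : ℝ := -(u + a * μ) ^ 2 / (2 * (1 + a ^ 2 * σ ^ 2)) with hB
  have hpt : ∀ x : ℝ, (1 / (σ * Real.sqrt (2 * π)) * Real.exp (-(x - μ) ^ 2 / (2 * σ ^ 2))) *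
      (Real.exp (-(u + a * x) ^ 2 / 2) / Real.sqrt (2 * π)) =
      (Real.exp B / (2 * π * σ)) * Real.exp (-k0 * (x - c) ^ 2) := by
    intro x
    have e : -(x - μ) ^ 2 / (2 * σ ^ 2) + -(u + a * x) ^ 2 / 2 = B + -k0 * (x - c) ^ 2 := by
      rw [hB, hk0, hc]
      field_simp
      ring
    rw [show (1 / (σ * Real.sqrt (2 * π)) * Real.exp (-(x - μ) ^ 2 / (2 * σ ^ 2))) *
        (Real.exp (-(u + a * x) ^ 2 / 2) / Real.sqrt (2 * π)) =
        (Real.exp (-(x - μ) ^ 2 / (2 * σ ^ 2)) * Real.exp (-(u + a * x) ^ 2 / 2)) /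
          (σ * (Real.sqrt (2 * π) * Real.sqrt (2 * π))) from by ring,
      ← Real.exp_add, e, Real.exp_add, hS]
    ring
  simp_rw [hpt]
  rw [integral_const_mul, gauss_shift]
  have hsq : Real.sqrt (π / k0) = Real.sqrt (2 * π) * σ / Real.sqrt (1 + a ^ 2 * σ ^ 2) := by
    have h1 : π / k0 = (2 * π) * σ ^ 2 / (1 + a ^ 2 * σ ^ 2) := by
      rw [hk0]; field_simp
    rw [h1, Real.sqrt_div (by positivity), Real.sqrt_mul (by positivity), Real.sqrt_sq hσ.le]
  rw [hsq]
  have h2 : Real.sqrt (2 * π) ≠ 0 := by positivity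
  have h3 : Real.sqrt (1 + a ^ 2 * σ ^ 2) ≠ 0 := by positivity
  field_simp
  have h4 : Real.sqrt 2 * Real.sqrt π = Real.sqrt (2 * π) := (Real.sqrt_mul (by norm_num) π).symm
  exact Real.sq_sqrt hπ.le

lemma iic_scale (t c b2 : ℝ) (hb2 : 0 < b2) :
    ∫ u in Iic t, Real.exp (-(u + c) ^ 2 / (2 * b2)) / (Real.sqrt (2 * π) * Real.sqrt b2) =
    stdNormalCDF ((t + c) / Real.sqrt b2) := by
  have hb : (0:ℝ) < Real.sqrt b2 := Real.sqrt_pos.mpr hb2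
  set b : ℝ := Real.sqrt b2 with hbdef
  set F : ℝ → ℝ := fun v => Real.exp (-v ^ 2 / (2 * b2)) / (Real.sqrt (2 * π) * b) with hF
  have step1 : ∫ u in Iic t, Real.exp (-(u + c) ^ 2 / (2 * b2)) / (Real.sqrt (2 * π) * b)
      = ∫ v in Iic (t + c), F v := (iic_shift F c t).symm
  rw [step1]
  have Feven : ∀ v : ℝ, F (-v) = F v := fun v => by simp [hF, neg_sq]
  have step2 : ∫ v in Iic (t + c), F v = ∫ x in Ioi (-(t + c)), F x := by
    rw [← integral_comp_neg_Iic]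
    exact setIntegral_congr_fun measurableSet_Iic fun x _ => (Feven x).symm
  rw [step2]
  have hbx : ∀ x : ℝ, F (b * x) = (Real.exp (-x ^ 2 / 2) / Real.sqrt (2 * π)) * b⁻¹ := by
    intro x
    have : -(b * x) ^ 2 / (2 * b2) = -x ^ 2 / 2 := by
      rw [mul_pow, hbdef, Real.sq_sqrt hb2.le]
      field_simp
    rw [hF]
    simp only [this]
    field_simp
  have step3 := integral_comp_mul_left_Ioi F (-(t + c) / b) hb
  rw [show b * (-(t + c) / b) = -(t + c) from by field_simp] at step3
  have step3' : ∫ x in Ioi (-(t + c)), F x = b * ∫ x in Ioi (-(t + c) / b), F (b * x) := by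
    rw [step3, smul_eq_mul]
    field_simp
  rw [step3']
  simp_rw [hbx]
  rw [integral_mul_const,
    show b * ((∫ x in Ioi (-(t + c) / b), Real.exp (-x ^ 2 / 2) / Real.sqrt (2 * π)) * b⁻¹)
      = ∫ x in Ioi (-(t + c) / b), Real.exp (-x ^ 2 / 2) / Real.sqrt (2 * π) from by
        field_simp]
  have refl2 : ∫ x in Ioi (-(t + c) / b), Real.exp (-x ^ 2 / 2) / Real.sqrt (2 * π)
      = ∫ x in Iic ((t + c) / b), Real.exp (-x ^ 2 / 2) / Real.sqrt (2 * π) := by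
    rw [show ∫ x in Ioi (-(t + c) / b), Real.exp (-x ^ 2 / 2) / Real.sqrt (2 * π)
        = ∫ x in Ioi (-(t + c) / b), Real.exp (-(-x) ^ 2 / 2) / Real.sqrt (2 * π) from
      setIntegral_congr_fun measurableSet_Ioi fun x _ => by rw [neg_sq],
      integral_comp_neg_Ioi (-(t + c) / b) (fun x => Real.exp (-x ^ 2 / 2) / Real.sqrt (2 * π))]
    rw [show -(-(t + c) / b) = (t + c) / b from by ring]
  rw [refl2]
  rfl

noncomputable def gStd : ℝ → ℝ := fun s => Real.exp (-s ^ 2 / 2) / Real.sqrt (2 * Real.pi)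

noncomputable def hDen (μ σ : ℝ) : ℝ → ℝ :=
  fun x => 1 / (σ * Real.sqrt (2 * Real.pi)) * Real.exp (-(x - μ) ^ 2 / (2 * σ ^ 2))

lemma gStd_cont : Continuous gStd := by unfold gStd; fun_prop

lemma hDen_cont (μ σ : ℝ) : Continuous (hDen μ σ) := by unfold hDen; fun_prop

lemma gStd_int : Integrable gStd := by
  have e : gStd = fun s => Real.exp (-(1/2 : ℝ) * s ^ 2) / Real.sqrt (2 * Real.pi) := by
    funext s; unfold gStd; congr 2; ring
  rw [e]; exact (integrable_exp_neg_mul_sq (by norm_num)).div_const _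

lemma hDen_int (μ σ : ℝ) (hσ : 0 < σ) : Integrable (hDen μ σ) := by
  have base : Integrable (fun x : ℝ => Real.exp (-(1 / (2 * σ ^ 2)) * x ^ 2)) :=
    integrable_exp_neg_mul_sq (by positivity)
  have base2 := base.comp_sub_right μ
  have e : hDen μ σ = fun x => 1 / (σ * Real.sqrt (2 * Real.pi)) *
      Real.exp (-(1 / (2 * σ ^ 2)) * (x - μ) ^ 2) := by
    funext x; unfold hDen; congr 2; ring
  rw [e]; exact base2.const_mul _

lemma inner_gauss' (a μ σ u : ℝ) (hσ : 0 < σ) :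
    ∫ x : ℝ, hDen μ σ x * gStd (u + a * x) =
    Real.exp (-(u + a * μ) ^ 2 / (2 * (1 + a ^ 2 * σ ^ 2))) /
      (Real.sqrt (2 * π) * Real.sqrt (1 + a ^ 2 * σ ^ 2)) := by
  have := inner_gauss a μ σ u hσ
  simpa only [hDen, gStd] using this

set_option maxHeartbeats 2000000 in
/-- Lemma A.1 (probit integral lemma): for all `t a μ : ℝ` and `σ > 0`,
`∫ Φ(t + a x) · (1/(σ√(2π))) exp(−(x−μ)²/(2σ²)) dx = Φ((t + aμ)/√(1 + a²σ²))`. -/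
theorem probit_integral (t a μ σ : ℝ) (hσ : 0 < σ) :
    ∫ x : ℝ, stdNormalCDF (t + a * x) *
      (1 / (σ * Real.sqrt (2 * Real.pi)) * Real.exp (-(x - μ) ^ 2 / (2 * σ ^ 2))) =
    stdNormalCDF ((t + a * μ) / Real.sqrt (1 + a ^ 2 * σ ^ 2)) := by
  have hb2 : (0:ℝ) < 1 + a ^ 2 * σ ^ 2 := by positivity
  have hgc := gStd_cont
  have hhc := hDen_cont μ σ
  have hg_int := gStd_int
  have hh_int := hDen_int μ σ hσ
  have prod_int : Integrable (fun p : ℝ × ℝ => hDen μ σ p.1 * gStd p.2)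
      ((volume : Measure ℝ).prod volume) := hh_int.mul_prod hg_int
  have shear : MeasurePreserving (fun p : ℝ × ℝ => (p.1, p.2 + a * p.1))
      ((volume : Measure ℝ).prod volume) ((volume : Measure ℝ).prod volume) := by
    apply (MeasurePreserving.id volume).skew_product (g := fun x u => u + a * x)
    · fun_prop
    · exact Filter.Eventually.of_forall fun x =>
        (measurePreserving_add_right volume (a * x)).map_eq
  have G_int : Integrable (fun p : ℝ × ℝ => hDen μ σ p.1 * gStd (p.2 + a * p.1))
      ((volume : Measure ℝ).prod volume) := by
    have := (shear.integrable_comp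
      ((hhc.comp continuous_fst).mul (hgc.comp continuous_snd)).aestronglyMeasurable).mpr prod_int
    simpa [Function.comp_def] using this
  have F_meas : AEStronglyMeasurable (Function.uncurry (fun x u =>
      Set.indicator (Iic t) (fun _ => (1:ℝ)) u * (hDen μ σ x * gStd (u + a * x))))
      ((volume : Measure ℝ).prod volume) := by
    apply Measurable.aestronglyMeasurable
    apply Measurable.mul
    · exact (Measurable.indicator measurable_const measurableSet_Iic).comp measurable_snd
    · exact ((hhc.comp continuous_fst).mul
        (hgc.comp (continuous_snd.add (continuous_const.mul continuous_fst)))).measurable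
  have F_int : Integrable (Function.uncurry (fun x u =>
      Set.indicator (Iic t) (fun _ => (1:ℝ)) u * (hDen μ σ x * gStd (u + a * x))))
      ((volume : Measure ℝ).prod volume) := by
    apply G_int.mono F_meas
    refine Filter.Eventually.of_forall fun p => ?_
    simp only [Function.uncurry]
    rw [norm_mul]
    have hle : ‖Set.indicator (Iic t) (fun _ => (1:ℝ)) p.2‖ ≤ 1 := by
      by_cases hp : p.2 ∈ Iic t <;> simp [hp]
    exact le_trans (mul_le_mul_of_nonneg_right hle (norm_nonneg _)) (by rw [one_mul])
  have main : ∫ x : ℝ, stdNormalCDF (t + a * x) * hDen μ σ x =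
      stdNormalCDF ((t + a * μ) / Real.sqrt (1 + a ^ 2 * σ ^ 2)) := by
    calc ∫ x : ℝ, stdNormalCDF (t + a * x) * hDen μ σ x
        = ∫ x : ℝ, ∫ u : ℝ,
            Set.indicator (Iic t) (fun _ => (1:ℝ)) u * (hDen μ σ x * gStd (u + a * x)) := by
          congr 1; funext x
          have e1 : stdNormalCDF (t + a * x) = ∫ u in Iic t, gStd (u + a * x) :=
            iic_shift gStd (a * x) t
          rw [e1, ← integral_mul_const]
          rw [show ∫ u in Iic t, gStd (u + a * x) * hDen μ σ x
              = ∫ u in Iic t, hDen μ σ x * gStd (u + a * x) from by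
            congr 1; funext u; ring]
          rw [← integral_indicator measurableSet_Iic]
          congr 1; funext u
          by_cases hu : u ∈ Iic t <;> simp [hu]
      _ = ∫ u : ℝ, ∫ x : ℝ,
            Set.indicator (Iic t) (fun _ => (1:ℝ)) u * (hDen μ σ x * gStd (u + a * x)) :=
          integral_integral_swap F_int
      _ = ∫ u : ℝ, Set.indicator (Iic t)
            (fun u => ∫ x : ℝ, hDen μ σ x * gStd (u + a * x)) u := by
          congr 1; funext u
          by_cases hu : u ∈ Iic t <;> simp [hu]
      _ = ∫ u in Iic t, ∫ x : ℝ, hDen μ σ x * gStd (u + a * x) :=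
          integral_indicator measurableSet_Iic
      _ = ∫ u in Iic t, Real.exp (-(u + a * μ) ^ 2 / (2 * (1 + a ^ 2 * σ ^ 2))) /
            (Real.sqrt (2 * π) * Real.sqrt (1 + a ^ 2 * σ ^ 2)) :=
          setIntegral_congr_fun measurableSet_Iic fun u _ => inner_gauss' a μ σ u hσ
      _ = stdNormalCDF ((t + a * μ) / Real.sqrt (1 + a ^ 2 * σ ^ 2)) :=
          iic_scale t (a * μ) (1 + a ^ 2 * σ ^ 2) hb2
  simpa only [hDen] using main
end

section
/- Let Z be a real random variable distributed as a Gaussian with mean μ and variance σ² (σ² ≥ 0). Then for all real t and a, E[Φ(t + a·Z)] = Φ((t + a·μ)/√(1 + a²σ²)). -/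
open MeasureTheory ProbabilityTheory Real
open scoped NNReal

open scoped ENNReal

namespace ProbitAux

/-- The standard normal density. -/
noncomputable def phi (x : ℝ) : ℝ := Real.exp (-x ^ 2 / 2) / Real.sqrt (2 * Real.pi)

lemma stdNormalCDF_eq (t : ℝ) : stdNormalCDF t = ∫ s in Set.Iic t, phi s := rfl

lemma continuous_phi : Continuous phi := by
  unfold phi; fun_prop

lemma phi_nonneg (x : ℝ) : 0 ≤ phi x := by unfold phi; positivity

lemma integrable_phi : Integrable phi := by
  have h : Integrable (fun x : ℝ => Real.exp (-(1/2 : ℝ) * x ^ 2)) :=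
    integrable_exp_neg_mul_sq (by norm_num)
  refine (h.div_const (Real.sqrt (2 * Real.pi))).congr ?_
  filter_upwards with x
  simp only [phi]
  ring_nf

lemma integral_phi : ∫ x, phi x = 1 := by
  unfold phi
  rw [integral_div]
  have : ∀ x : ℝ, Real.exp (-x ^ 2 / 2) = Real.exp (-(1/2 : ℝ) * x ^ 2) := by
    intro x; ring_nf
  simp_rw [this]
  rw [integral_gaussian]
  rw [div_eq_one_iff_eq (by positivity)]
  congr 1
  rw [div_div_eq_mul_div, div_eq_iff (by norm_num)]
  ring

lemma monotone_stdNormalCDF : Monotone stdNormalCDF := by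
  intro x y hxy
  apply setIntegral_mono_set integrable_phi.integrableOn
  · filter_upwards with s using phi_nonneg s
  · exact Filter.Eventually.of_forall fun s hs => le_trans hs hxy

lemma measurable_stdNormalCDF : Measurable stdNormalCDF :=
  monotone_stdNormalCDF.measurable

lemma setIntegral_Iic_add (f : ℝ → ℝ) (c d : ℝ) :
    ∫ s in Set.Iic (c + d), f s = ∫ y in Set.Iic c, f (y + d) := by
  have hmp : MeasurePreserving (fun y : ℝ => y + d) volume volume :=
    measurePreserving_add_right volume d
  have hme : MeasurableEmbedding (fun y : ℝ => y + d) :=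
    (Homeomorph.addRight d).measurableEmbedding
  have h1 : ∫ s in Set.Iic (c + d), f s
      = ∫ s in Set.Iic (c + d), f s ∂(Measure.map (fun y : ℝ => y + d) volume) := by
    rw [hmp.map_eq]
  rw [h1, hme.setIntegral_map]
  have : (fun y : ℝ => y + d) ⁻¹' Set.Iic (c + d) = Set.Iic c := by
    ext y; simp [Set.mem_Iic]
  rw [this]

lemma setIntegral_Iic_mul (f : ℝ → ℝ) (c r : ℝ) (hr : 0 < r) :
    ∫ y in Set.Iic c, f y = r * ∫ x in Set.Iic (c / r), f (r * x) := by
  have hme : MeasurableEmbedding (fun x : ℝ => r * x) :=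
    (Homeomorph.mulLeft₀ r hr.ne').measurableEmbedding
  have hmap : Measure.map (fun x : ℝ => r * x) volume = ENNReal.ofReal r⁻¹ • volume := by
    rw [Real.map_volume_mul_left hr.ne']
    congr 1
    rw [abs_of_pos (inv_pos.mpr hr)]
  have h1 : ∫ y in Set.Iic c, f y ∂(Measure.map (fun x : ℝ => r * x) volume)
      = ∫ x in (fun x : ℝ => r * x) ⁻¹' Set.Iic c, f (r * x) ∂volume :=
    hme.setIntegral_map f (Set.Iic c)
  rw [hmap] at h1
  have hpre : (fun x : ℝ => r * x) ⁻¹' Set.Iic c = Set.Iic (c / r) := by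
    ext x; simp [Set.mem_Iic, le_div_iff₀ hr, mul_comm]
  rw [hpre] at h1
  have h2 : ∫ y in Set.Iic c, f y ∂((ENNReal.ofReal r⁻¹ • volume : Measure ℝ))
      = r⁻¹ * ∫ y in Set.Iic c, f y := by
    rw [Measure.restrict_smul, integral_smul_measure, smul_eq_mul,
      ENNReal.toReal_ofReal (by positivity)]
  rw [h2] at h1
  field_simp at h1 ⊢
  linarith [h1]

lemma gaussCDF (c w : ℝ) (hw : 0 < w) :
    ∫ y in Set.Iic c, Real.exp (-y ^ 2 / (2 * w)) / Real.sqrt (2 * Real.pi * w)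
      = stdNormalCDF (c / Real.sqrt w) := by
  have hrw : (0:ℝ) < Real.sqrt w := Real.sqrt_pos.mpr hw
  rw [setIntegral_Iic_mul _ c (Real.sqrt w) hrw, stdNormalCDF]
  rw [← integral_const_mul]
  apply setIntegral_congr_fun measurableSet_Iic
  intro x _
  have hsq : Real.sqrt w * Real.sqrt w = w := Real.mul_self_sqrt hw.le
  have h1 : (Real.sqrt w * x) ^ 2 / (2 * w) = x ^ 2 / 2 := by
    field_simp
    ring_nf
    rw [Real.sq_sqrt hw.le]
    ring
  have h2 : Real.sqrt (2 * Real.pi * w) = Real.sqrt (2 * Real.pi) * Real.sqrt w := by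
    rw [Real.sqrt_mul (by positivity)]
  simp only []
  have h3 : -(Real.sqrt w * x) ^ 2 / (2 * w) = -x ^ 2 / 2 := by rw [neg_div, h1, neg_div]
  rw [h3, h2]
  field_simp

lemma inner_gauss (b y : ℝ) :
    ∫ x : ℝ, Real.exp (-(y + b * x) ^ 2 / 2) * Real.exp (-x ^ 2 / 2)
      = Real.exp (-y ^ 2 / (2 * (1 + b ^ 2))) * Real.sqrt (2 * Real.pi / (1 + b ^ 2)) := by
  have hb : (0:ℝ) < 1 + b ^ 2 := by positivity
  set k : ℝ := 1 + b ^ 2 with hk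
  set d : ℝ := b * y / k with hd
  have key : ∀ x : ℝ, Real.exp (-(y + b * x) ^ 2 / 2) * Real.exp (-x ^ 2 / 2)
      = Real.exp (-y ^ 2 / (2 * k)) * Real.exp (-(k / 2) * (x + d) ^ 2) := by
    intro x
    rw [← Real.exp_add, ← Real.exp_add]
    congr 1
    rw [hd, hk]
    field_simp [(by positivity : (1:ℝ) + b ^ 2 ≠ 0)]
    ring
  simp_rw [key]
  rw [integral_const_mul]
  congr 1
  have htrans : ∫ x : ℝ, Real.exp (-(k / 2) * (x + d) ^ 2)
      = ∫ x : ℝ, Real.exp (-(k / 2) * x ^ 2) :=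
    integral_add_right_eq_self (fun x => Real.exp (-(k / 2) * x ^ 2)) d
  rw [htrans, integral_gaussian]
  congr 1
  rw [div_div_eq_mul_div]
  ring_nf

lemma lemB (b c : ℝ) :
    ∫ x : ℝ, stdNormalCDF (c + b * x) * phi x
      = stdNormalCDF (c / Real.sqrt (1 + b ^ 2)) := by
  have hk : (0:ℝ) < 1 + b ^ 2 := by positivity
  have h1 : ∀ x : ℝ, stdNormalCDF (c + b * x) * phi x
      = ∫ y in Set.Iic c, phi (y + b * x) * phi x := by
    intro x
    rw [stdNormalCDF_eq, setIntegral_Iic_add _ c (b * x), ← integral_mul_const]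
  simp_rw [h1]
  have hcont : Continuous (fun z : ℝ × ℝ => phi (z.2 + b * z.1) * phi z.1) :=
    (continuous_phi.comp (continuous_snd.add (continuous_const.mul continuous_fst))).mul
      (continuous_phi.comp continuous_fst)
  have hInt : Integrable (fun z : ℝ × ℝ => phi (z.2 + b * z.1) * phi z.1)
      (volume.prod (volume.restrict (Set.Iic c))) := by
    rw [integrable_prod_iff hcont.aestronglyMeasurable]
    constructor
    · filter_upwards with x
      exact ((integrable_phi.comp_add_right (b * x)).mul_const (phi x)).restrict
    · have hbound : ∀ x : ℝ,
          (∫ y in Set.Iic c, ‖phi (y + b * x) * phi x‖) ≤ phi x := by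
        intro x
        have heq : ∀ y : ℝ, ‖phi (y + b * x) * phi x‖ = phi (y + b * x) * phi x := by
          intro y
          rw [Real.norm_eq_abs, abs_of_nonneg (mul_nonneg (phi_nonneg _) (phi_nonneg _))]
        simp_rw [heq]
        rw [integral_mul_const]
        have h2 : ∫ y in Set.Iic c, phi (y + b * x) ≤ ∫ y, phi (y + b * x) := by
          apply setIntegral_le_integral (integrable_phi.comp_add_right (b * x))
          filter_upwards with y using phi_nonneg _
        have h3 : ∫ y : ℝ, phi (y + b * x) = 1 := by
          rw [integral_add_right_eq_self phi (b * x), integral_phi]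
        nlinarith [phi_nonneg x, setIntegral_nonneg (μ := volume) (measurableSet_Iic (a := c))
          (fun y _ => phi_nonneg (y + b * x))]
      have hmeas : StronglyMeasurable
          (fun x : ℝ => ∫ y in Set.Iic c, ‖phi (y + b * x) * phi x‖) := by
        have : Continuous (fun z : ℝ × ℝ => ‖phi (z.2 + b * z.1) * phi z.1‖) := hcont.norm
        exact this.stronglyMeasurable.integral_prod_right'
      refine Integrable.mono integrable_phi hmeas.aestronglyMeasurable ?_
      filter_upwards with x
      rw [Real.norm_eq_abs, Real.norm_eq_abs, abs_of_nonneg (phi_nonneg x),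
        abs_of_nonneg (integral_nonneg fun y => norm_nonneg _)]
      exact hbound x
  have hswap := integral_integral_swap (f := fun x y => phi (y + b * x) * phi x) hInt
  rw [hswap]
  have hinner : ∀ y : ℝ, (∫ x : ℝ, phi (y + b * x) * phi x)
      = Real.exp (-y ^ 2 / (2 * (1 + b ^ 2))) / Real.sqrt (2 * Real.pi * (1 + b ^ 2)) := by
    intro y
    have he : ∀ x : ℝ, phi (y + b * x) * phi x
        = (Real.exp (-(y + b * x) ^ 2 / 2) * Real.exp (-x ^ 2 / 2)) / (2 * Real.pi) := by
      intro x
      unfold phi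
      rw [div_mul_div_comm, Real.mul_self_sqrt (by positivity)]
    simp_rw [he]
    rw [integral_div, inner_gauss]
    have h2π : Real.sqrt (2 * Real.pi) * Real.sqrt (2 * Real.pi) = 2 * Real.pi :=
      Real.mul_self_sqrt (by positivity)
    rw [Real.sqrt_div (by positivity : (0:ℝ) ≤ 2 * Real.pi),
      Real.sqrt_mul (by positivity : (0:ℝ) ≤ 2 * Real.pi)]
    rw [div_eq_div_iff (by positivity) (by positivity)]
    have hkne : Real.sqrt (1 + b ^ 2) ≠ 0 := by positivity
    set E := Real.exp (-y ^ 2 / (2 * (1 + b ^ 2))) with hE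
    rw [show E * (Real.sqrt (2 * Real.pi) / Real.sqrt (1 + b ^ 2)) *
        (Real.sqrt (2 * Real.pi) * Real.sqrt (1 + b ^ 2))
        = E * (Real.sqrt (2 * Real.pi) * Real.sqrt (2 * Real.pi)) *
          (Real.sqrt (1 + b ^ 2) / Real.sqrt (1 + b ^ 2)) from by ring,
      div_self hkne, h2π]
    ring
  simp_rw [hinner]
  exact gaussCDF c (1 + b ^ 2) hk

lemma gaussianPDFReal_zero_one (x : ℝ) : gaussianPDFReal 0 1 x = phi x := by
  simp only [gaussianPDFReal, phi, NNReal.coe_one, mul_one, sub_zero]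
  ring

end ProbitAux

open ProbitAux

/-- If `Z ~ N(μ, σ²)` (variance `v = σ² ≥ 0`), then
`E[Φ(t + a Z)] = Φ((t + a μ)/√(1 + a² σ²))`. -/
theorem probit_gaussian_expectation {Ω : Type*} [MeasurableSpace Ω]
    (P : Measure Ω) [IsProbabilityMeasure P]
    (Z : Ω → ℝ) (hZ : Measurable Z) (μ : ℝ) (v : ℝ≥0)
    (hdist : P.map Z = gaussianReal μ v) (t a : ℝ) :
    ∫ ω, stdNormalCDF (t + a * Z ω) ∂P =
      stdNormalCDF ((t + a * μ) / Real.sqrt (1 + a ^ 2 * (v : ℝ))) := by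
  have hf : Measurable (fun x : ℝ => stdNormalCDF (t + a * x)) :=
    measurable_stdNormalCDF.comp (measurable_const.add (measurable_const.mul measurable_id))
  have step1 : ∫ ω, stdNormalCDF (t + a * Z ω) ∂P
      = ∫ x, stdNormalCDF (t + a * x) ∂(gaussianReal μ v) := by
    rw [← hdist, integral_map hZ.aemeasurable hf.aestronglyMeasurable]
  rw [step1]
  by_cases hv : v = 0
  · subst hv
    rw [gaussianReal_zero_var, integral_dirac]
    norm_num
  -- v ≠ 0
  have hvpos : (0:ℝ) < (v:ℝ) := lt_of_le_of_ne v.coe_nonneg (by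
    simpa [eq_comm] using (NNReal.coe_ne_zero).mpr hv)
  have hσ : (0:ℝ) < Real.sqrt v := Real.sqrt_pos.mpr hvpos
  -- gaussianReal μ v as pushforward of the standard Gaussian
  have hmap1 : (gaussianReal 0 1).map (fun x => Real.sqrt v * x) = gaussianReal 0 v := by
    rw [show (fun x : ℝ => Real.sqrt v * x) = ((Real.sqrt v : ℝ) * ·) from rfl,
      gaussianReal_map_const_mul]
    congr 1
    · ring
    · ext
      simp [Real.sq_sqrt v.coe_nonneg]
  have hmap2 : (gaussianReal 0 v).map (· + μ) = gaussianReal μ v := by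
    rw [gaussianReal_map_add_const]
    congr 1
    ring
  have hcomp : gaussianReal μ v
      = (gaussianReal 0 1).map (fun x => Real.sqrt v * x + μ) := by
    have hmm := Measure.map_map (μ := gaussianReal 0 1)
      (f := fun x : ℝ => Real.sqrt v * x) (g := fun x : ℝ => x + μ)
      (by fun_prop) (by fun_prop)
    rw [← hmap2, ← hmap1, hmm]
    rfl
  rw [hcomp, integral_map (by fun_prop) hf.aestronglyMeasurable]
  -- standard Gaussian as density
  have hdens : gaussianReal 0 1
      = volume.withDensity (fun x => ((gaussianPDFReal 0 1 x).toNNReal : ℝ≥0∞)) := by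
    rw [gaussianReal_of_var_ne_zero 0 one_ne_zero]
    congr
  rw [hdens, integral_withDensity_eq_integral_smul
    ((measurable_gaussianPDFReal 0 1).real_toNNReal : Measurable fun x => (gaussianPDFReal 0 1 x).toNNReal) _]
  have hpt : ∀ x : ℝ, (gaussianPDFReal 0 1 x).toNNReal •
        stdNormalCDF (t + a * (Real.sqrt v * x + μ))
      = stdNormalCDF ((t + a * μ) + (a * Real.sqrt v) * x) * phi x := by
    intro x
    rw [NNReal.smul_def, smul_eq_mul, Real.coe_toNNReal _ (gaussianPDFReal_nonneg 0 1 x),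
      gaussianPDFReal_zero_one, mul_comm]
    congr 2
    ring
  simp_rw [hpt]
  rw [lemB (a * Real.sqrt v) (t + a * μ)]
  congr 2
  rw [mul_pow, Real.sq_sqrt v.coe_nonneg]
end

section
/- Let (Ω, F, P) be a probability space, V : Ω → ℝ^k a measurable random vector, f : ℝ^k → ℝ a measurable function, and W : Ω → ℝ a random variable independent of V with W distributed as a Gaussian with mean m and variance s² > 0. Then, P-almost surely, the conditional expectation of Φ(f(V) + W) given the σ-algebra generated by V equals Φ((f(V) + m)/√(1 + s²)). -/
open MeasureTheory ProbabilityTheory Real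
open scoped NNReal

open scoped ENNReal

lemma stdNormalCDF_eq_integral_pdf (t : ℝ) :
    stdNormalCDF t = ∫ s in Set.Iic t, gaussianPDFReal 0 1 s := by
  refine setIntegral_congr_fun measurableSet_Iic fun s _ => ?_
  simp [gaussianPDFReal, div_eq_mul_inv, mul_comm]

lemma stdNormalCDF_eq_toReal (t : ℝ) :
    stdNormalCDF t = (gaussianReal 0 1 (Set.Iic t)).toReal := by
  rw [gaussianReal_apply_eq_integral 0 one_ne_zero,
    ENNReal.toReal_ofReal (integral_nonneg fun x => gaussianPDFReal_nonneg _ _ _),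
    stdNormalCDF_eq_integral_pdf]

lemma ofReal_stdNormalCDF (t : ℝ) :
    ENNReal.ofReal (stdNormalCDF t) = gaussianReal 0 1 (Set.Iic t) := by
  rw [stdNormalCDF_eq_toReal, ENNReal.ofReal_toReal (measure_ne_top _ _)]

lemma stdNormalCDF_nonneg (t : ℝ) : 0 ≤ stdNormalCDF t := by
  rw [stdNormalCDF_eq_toReal]; exact ENNReal.toReal_nonneg

lemma stdNormalCDF_le_one (t : ℝ) : stdNormalCDF t ≤ 1 := by
  rw [stdNormalCDF_eq_toReal]
  exact ENNReal.toReal_le_of_le_ofReal zero_le_one (by simpa using prob_le_one)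

lemma stdNormalCDF_mono : Monotone stdNormalCDF := by
  intro a b hab
  rw [stdNormalCDF_eq_toReal, stdNormalCDF_eq_toReal]
  exact ENNReal.toReal_mono (measure_ne_top _ _) (measure_mono (Set.Iic_subset_Iic.mpr hab))

lemma measurable_stdNormalCDF : Measurable stdNormalCDF := stdNormalCDF_mono.measurable

lemma abs_stdNormalCDF_le_one (t : ℝ) : ‖stdNormalCDF t‖ ≤ 1 := by
  rw [Real.norm_eq_abs, abs_of_nonneg (stdNormalCDF_nonneg t)]
  exact stdNormalCDF_le_one t

lemma one_add_ne_zero' (s2 : ℝ≥0) : (1 + s2) ≠ 0 :=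
  (add_pos_of_pos_of_nonneg one_pos zero_le).ne'

lemma gaussianPDFReal_mul (m : ℝ) {s2 : ℝ≥0} (hs2 : s2 ≠ 0) (u w : ℝ) :
    gaussianPDFReal 0 1 (u + w) * gaussianPDFReal m s2 w
      = gaussianPDFReal (-m) (1 + s2) u
        * gaussianPDFReal ((m - s2 * u) / (1 + s2)) (s2 / (1 + s2)) w := by
  have hc : (0:ℝ) < s2 := by positivity
  have h1c : (0:ℝ) < 1 + (s2:ℝ) := by positivity
  simp only [gaussianPDFReal, NNReal.coe_one, NNReal.coe_add, NNReal.coe_div, NNReal.coe_mul,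
    sub_zero]
  rw [mul_mul_mul_comm, mul_mul_mul_comm ((√(2 * π * (1 + (s2:ℝ))))⁻¹), ← Real.exp_add,
    ← Real.exp_add]
  congr 1
  · rw [← mul_inv, ← mul_inv, ← Real.sqrt_mul (by positivity), ← Real.sqrt_mul (by positivity)]
    congr 1
    field_simp
  · congr 1
    field_simp
    ring

lemma integral_gaussianPDFReal_mul (m : ℝ) {s2 : ℝ≥0} (hs2 : s2 ≠ 0) (u : ℝ) :
    ∫ w, gaussianPDFReal 0 1 (u + w) * gaussianPDFReal m s2 w
      = gaussianPDFReal (-m) (1 + s2) u := by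
  simp_rw [gaussianPDFReal_mul m hs2 u]
  rw [integral_const_mul, integral_gaussianPDFReal_eq_one _ (div_ne_zero hs2 (one_add_ne_zero' s2)),
    mul_one]

lemma integrable_mul_pdf (m : ℝ) (s2 : ℝ≥0) (u : ℝ) :
    Integrable (fun w => gaussianPDFReal 0 1 (u + w) * gaussianPDFReal m s2 w) := by
  refine (integrable_gaussianPDFReal m s2).bdd_mul
    ((measurable_gaussianPDFReal 0 1).comp (measurable_const_add u)).aestronglyMeasurable
    (c := (√(2 * π * (1:ℝ≥0)))⁻¹) (ae_of_all _ fun w => ?_)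
  rw [Real.norm_eq_abs, abs_of_nonneg (gaussianPDFReal_nonneg _ _ _)]
  unfold gaussianPDFReal
  calc (√(2 * π * (1:ℝ≥0)))⁻¹ * rexp (-(u + w - 0) ^ 2 / (2 * (1:ℝ≥0)))
      ≤ (√(2 * π * (1:ℝ≥0)))⁻¹ * 1 := by
        gcongr
        rw [Real.exp_le_one_iff]
        have : (0:ℝ) ≤ (u + w - 0)^2 := sq_nonneg _
        have h2 : (0:ℝ) < 2 * ((1:ℝ≥0):ℝ) := by norm_num
        exact div_nonpos_of_nonpos_of_nonneg (neg_nonpos_of_nonneg this) h2.le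
    _ = _ := mul_one _

lemma gaussianReal_Iic_toReal (μm : ℝ) {v : ℝ≥0} (hv : v ≠ 0) (a : ℝ) :
    ((gaussianReal μm v) (Set.Iic a)).toReal = stdNormalCDF ((a - μm) / Real.sqrt v) := by
  have hc : (0:ℝ) < √(v:ℝ) := Real.sqrt_pos.mpr (by positivity)
  have hmap : gaussianReal μm v
      = ((gaussianReal 0 1).map (fun x => √(v:ℝ) * x)).map (· + μm) := by
    rw [show (fun x => √(v:ℝ) * x) = (√(v:ℝ) * ·) from rfl, gaussianReal_map_const_mul,
      gaussianReal_map_add_const]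
    congr 1
    · ring
    · ext
      simp [Real.sq_sqrt v.coe_nonneg]
  rw [hmap, Measure.map_apply (measurable_add_const μm) measurableSet_Iic]
  have hpre : (· + μm) ⁻¹' Set.Iic a = Set.Iic (a - μm) := by
    ext x; simp [le_sub_iff_add_le]
  rw [hpre, Measure.map_apply (measurable_const_mul _) measurableSet_Iic]
  have hpre2 : (√(v:ℝ) * ·) ⁻¹' Set.Iic (a - μm) = Set.Iic ((a - μm) / √(v:ℝ)) := by
    ext x
    simp only [Set.mem_preimage, Set.mem_Iic, le_div_iff₀ hc]
    rw [mul_comm]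
  rw [hpre2, ← stdNormalCDF_eq_toReal]

lemma integral_stdNormalCDF_gaussian (m : ℝ) {s2 : ℝ≥0} (hs2 : s2 ≠ 0) (a : ℝ) :
    ∫ w, stdNormalCDF (a + w) ∂(gaussianReal m s2)
      = stdNormalCDF ((a + m) / Real.sqrt (1 + (s2 : ℝ))) := by
  have h1s2 : (1 + s2 : ℝ≥0) ≠ 0 := one_add_ne_zero' s2
  have key : ∫⁻ w, ENNReal.ofReal (stdNormalCDF (a + w)) ∂(gaussianReal m s2)
      = gaussianReal (-m) (1 + s2) (Set.Iic a) := by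
    have hg : Measurable fun w : ℝ => ENNReal.ofReal (stdNormalCDF (a + w)) :=
      (measurable_stdNormalCDF.comp (measurable_const_add a)).ennreal_ofReal
    rw [gaussianReal_of_var_ne_zero m hs2,
      lintegral_withDensity_eq_lintegral_mul _ (measurable_gaussianPDF m s2) hg]
    have h1 : ∀ w : ℝ, ENNReal.ofReal (stdNormalCDF (a + w))
        = ∫⁻ u in Set.Iic a, gaussianPDF 0 1 (u + w) := by
      intro w
      have hpre : (· + w) ⁻¹' Set.Iic (a + w) = Set.Iic a := by ext x; simp
      rw [ofReal_stdNormalCDF, gaussianReal_apply 0 one_ne_zero,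
        ← (measurePreserving_add_right volume w).setLIntegral_comp_preimage_emb
          (MeasurableEquiv.addRight w).measurableEmbedding, hpre]
    have h2 : ∀ w : ℝ, (gaussianPDF m s2 * fun w => ENNReal.ofReal (stdNormalCDF (a + w))) w
        = ∫⁻ u in Set.Iic a, gaussianPDF m s2 w * gaussianPDF 0 1 (u + w) := by
      intro w
      have hmw : Measurable fun u : ℝ => gaussianPDF 0 1 (u + w) :=
        (measurable_gaussianPDF 0 1).comp (measurable_add_const w)
      rw [Pi.mul_apply, h1 w, lintegral_const_mul _ hmw]
    simp_rw [h2]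
    rw [lintegral_lintegral_swap]
    · have h3 : ∀ u : ℝ, ∫⁻ w, gaussianPDF m s2 w * gaussianPDF 0 1 (u + w)
          = ENNReal.ofReal (gaussianPDFReal (-m) (1 + s2) u) := by
        intro u
        have heq : ∀ w : ℝ, gaussianPDF m s2 w * gaussianPDF 0 1 (u + w)
            = ENNReal.ofReal (gaussianPDFReal 0 1 (u + w) * gaussianPDFReal m s2 w) := by
          intro w
          rw [gaussianPDF, gaussianPDF, mul_comm,
            ← ENNReal.ofReal_mul (gaussianPDFReal_nonneg 0 1 _)]
        simp_rw [heq]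
        rw [← ofReal_integral_eq_lintegral_ofReal (integrable_mul_pdf m s2 u)
          (ae_of_all _ fun w =>
            mul_nonneg (gaussianPDFReal_nonneg _ _ _) (gaussianPDFReal_nonneg _ _ _)),
          integral_gaussianPDFReal_mul m hs2 u]
      simp_rw [h3]
      rw [gaussianReal_apply _ h1s2]
      rfl
    · refine (Measurable.aemeasurable ?_)
      exact (((measurable_gaussianPDF m s2).comp measurable_fst).mul
        ((measurable_gaussianPDF 0 1).comp (measurable_snd.add measurable_fst)))
  have hint := integral_eq_lintegral_of_nonneg_ae
    (μ := gaussianReal m s2) (f := fun w => stdNormalCDF (a + w))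
    (ae_of_all _ fun w => stdNormalCDF_nonneg _)
    ((measurable_stdNormalCDF.comp (measurable_const_add a)).aestronglyMeasurable)
  rw [hint, key, gaussianReal_Iic_toReal (-m) h1s2 a, sub_neg_eq_add]
  norm_num

/-- Core mechanism of Theorem 1: if `W ~ N(m, s²)` with `s² > 0` is independent of the
random vector `V`, then a.s.
`E[Φ(f(V) + W) | σ(V)] = Φ((f(V) + m)/√(1 + s²))`. -/
theorem probit_condexp {Ω : Type*} [MeasurableSpace Ω]
    (P : Measure Ω) [IsProbabilityMeasure P] (k : ℕ)
    (V : Ω → (Fin k → ℝ)) (hV : Measurable V)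
    (f : (Fin k → ℝ) → ℝ) (hf : Measurable f)
    (W : Ω → ℝ) (hW : Measurable W)
    (hindep : IndepFun V W P)
    (m : ℝ) (s2 : ℝ≥0) (hs2 : 0 < s2)
    (hWdist : P.map W = gaussianReal m s2) :
    ∀ᵐ ω ∂P,
      (P[fun ω => stdNormalCDF (f (V ω) + W ω) |
          MeasurableSpace.comap V inferInstance]) ω =
        stdNormalCDF ((f (V ω) + m) / Real.sqrt (1 + (s2 : ℝ))) := by
  have hm : MeasurableSpace.comap V inferInstance ≤ ‹MeasurableSpace Ω› :=
    hV.comap_le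
  haveI : SigmaFinite (P.trim hm) := by
    have : IsFiniteMeasure (P.trim hm) := isFiniteMeasure_trim hm
    infer_instance
  set F0 : Ω → ℝ := fun ω => stdNormalCDF (f (V ω) + W ω) with hF0
  set g0 : (Fin k → ℝ) → ℝ :=
    fun v => stdNormalCDF ((f v + m) / Real.sqrt (1 + (s2 : ℝ))) with hg0
  have hg0m : Measurable g0 :=
    measurable_stdNormalCDF.comp ((hf.add_const m).div_const _)
  have hF0m : Measurable F0 :=
    measurable_stdNormalCDF.comp ((hf.comp hV).add hW)
  have hF0int : Integrable F0 P :=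
    (integrable_const (1:ℝ)).mono' hF0m.aestronglyMeasurable
      (ae_of_all _ fun ω => abs_stdNormalCDF_le_one _)
  have hgVint : Integrable (fun ω => g0 (V ω)) P :=
    (integrable_const (1:ℝ)).mono' (hg0m.comp hV).aestronglyMeasurable
      (ae_of_all _ fun ω => abs_stdNormalCDF_le_one _)
  have hjoint : P.map (fun ω => (V ω, W ω)) = (P.map V).prod (gaussianReal m s2) := by
    rw [← hWdist]
    exact (indepFun_iff_map_prod_eq_prod_map_map hV.aemeasurable hW.aemeasurable).mp hindep
  haveI : IsProbabilityMeasure (P.map V) := Measure.isProbabilityMeasure_map hV.aemeasurable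
  have hg_eq : ∀ s : Set Ω, MeasurableSet[MeasurableSpace.comap V inferInstance] s →
      P s < ⊤ → ∫ ω in s, g0 (V ω) ∂P = ∫ ω in s, F0 ω ∂P := by
    rintro s ⟨B, hB, rfl⟩ -
    have hT : Measurable (fun ω => (V ω, W ω)) := hV.prodMk hW
    have hφ : Measurable fun p : (Fin k → ℝ) × ℝ => stdNormalCDF (f p.1 + p.2) :=
      measurable_stdNormalCDF.comp ((hf.comp measurable_fst).add measurable_snd)
    have hpre : V ⁻¹' B = (fun ω => (V ω, W ω)) ⁻¹' (B ×ˢ Set.univ) := by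
      ext ω; simp
    have hRHS : ∫ ω in V ⁻¹' B, F0 ω ∂P
        = ∫ p in B ×ˢ Set.univ, stdNormalCDF (f p.1 + p.2)
            ∂((P.map V).prod (gaussianReal m s2)) := by
      rw [← hjoint, setIntegral_map (hB.prod MeasurableSet.univ) hφ.aestronglyMeasurable
        hT.aemeasurable, ← hpre]
    have hIntProd : IntegrableOn (fun p : (Fin k → ℝ) × ℝ => stdNormalCDF (f p.1 + p.2))
        (B ×ˢ Set.univ) ((P.map V).prod (gaussianReal m s2)) := by
      refine Integrable.integrableOn ?_
      exact (integrable_const (1:ℝ)).mono' hφ.aestronglyMeasurable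
        (ae_of_all _ fun p => abs_stdNormalCDF_le_one _)
    have hfub : ∫ p in B ×ˢ Set.univ, stdNormalCDF (f p.1 + p.2)
          ∂((P.map V).prod (gaussianReal m s2))
        = ∫ x in B, ∫ y, stdNormalCDF (f x + y) ∂(gaussianReal m s2) ∂(P.map V) := by
      rw [setIntegral_prod _ hIntProd]
      simp_rw [Measure.restrict_univ]
    have hinner : ∀ x, ∫ y, stdNormalCDF (f x + y) ∂(gaussianReal m s2) = g0 x :=
      fun x => integral_stdNormalCDF_gaussian m hs2.ne' (f x)
    have hLHS : ∫ ω in V ⁻¹' B, g0 (V ω) ∂P = ∫ x in B, g0 x ∂(P.map V) :=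
      (setIntegral_map hB hg0m.aestronglyMeasurable hV.aemeasurable).symm
    rw [hLHS, hRHS, hfub]
    exact (setIntegral_congr_fun hB fun x _ => (hinner x).symm)
  have hgm : AEStronglyMeasurable[MeasurableSpace.comap V inferInstance]
      (fun ω => g0 (V ω)) P := by
    refine StronglyMeasurable.aestronglyMeasurable ?_
    have hVm : Measurable[MeasurableSpace.comap V inferInstance] V :=
      measurable_iff_comap_le.mpr le_rfl
    exact (hg0m.comp hVm).stronglyMeasurable
  have h := ae_eq_condExp_of_forall_setIntegral_eq hm hF0int
    (fun s _ _ => hgVint.integrableOn) hg_eq hgm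
  filter_upwards [h] with ω hω
  exact hω.symm
end

section
/- Let X₁ be a real random variable Gaussian with mean μ₁ and variance σ₁² (σ₁ > 0), let ρ ∈ [−1, 1], σ₂ ≥ 0, μ₂ ∈ ℝ, and let W be independent of X₁ and Gaussian with mean 0 and variance (1 − ρ²)σ₂² > 0. Define X₂ := μ₂ + ρ·(σ₂/σ₁)·(X₁ − μ₁) + W, so that (X₁, X₂) is a bivariate Gaussian vector with correlation ρ. Then for all β₀, β₁, β₂ ∈ ℝ, almost surely, |E[σ(β₀ + β₁X₁ + β₂X₂) | σ(X₁)] − σ((α₀ + α₁X₁)/√(1 + (π/8)·β₂²(1 − ρ²)σ₂²))| ≤ 2·‖δ‖_∞, where α₀ = β₀ + β₂μ₂ − β₂ρ(σ₂/σ₁)μ₁ and α₁ = β₁ + β₂ρσ₂/σ₁. -/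
open MeasureTheory ProbabilityTheory Real
open scoped NNReal

/-- The logistic (sigmoid) function `σ(t) = 1/(1 + e^{-t})`. -/
noncomputable def logisticFn (t : ℝ) : ℝ := 1 / (1 + Real.exp (-t))

/-- `δ(t) = Φ(t) − σ(√(8/π)·t)`. -/
noncomputable def deltaFn (t : ℝ) : ℝ :=
  stdNormalCDF t - logisticFn (Real.sqrt (8 / Real.pi) * t)

open scoped ENNReal
open Set

namespace Helpers
noncomputable def den (s : ℝ) : ℝ := Real.exp (-s ^ 2 / 2) / Real.sqrt (2 * Real.pi)
lemma den_eq_pdf : den = gaussianPDFReal 0 1 := by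
  ext s; simp [den, gaussianPDFReal, div_eq_inv_mul, mul_comm]
lemma den_nonneg (s : ℝ) : 0 ≤ den s := by unfold den; positivity
lemma den_even (s : ℝ) : den (-s) = den s := by simp [den]
lemma continuous_den : Continuous den := by unfold den; fun_prop
lemma integrable_den : Integrable den := by rw [den_eq_pdf]; exact integrable_gaussianPDFReal 0 1
lemma integral_den : ∫ s, den s = 1 := by
  rw [den_eq_pdf]; exact integral_gaussianPDFReal_eq_one 0 one_ne_zero
lemma stdNormalCDF_eq (t : ℝ) : stdNormalCDF t = ∫ s in Set.Iic t, den s := rfl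

lemma stdNormalCDF_nonneg (t : ℝ) : 0 ≤ stdNormalCDF t :=
  integral_nonneg fun s => den_nonneg s

lemma stdNormalCDF_le_one (t : ℝ) : stdNormalCDF t ≤ 1 := by
  rw [stdNormalCDF_eq, ← integral_den]
  exact setIntegral_le_integral integrable_den (ae_of_all _ fun s => den_nonneg s)

lemma stdNormalCDF_neg (t : ℝ) : stdNormalCDF (-t) = 1 - stdNormalCDF t := by
  rw [stdNormalCDF_eq, stdNormalCDF_eq, eq_sub_iff_add_eq, add_comm]
  have h1 : ∫ s in Set.Iic (-t), den s = ∫ s in Set.Ioi t, den s := by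
    rw [← integral_comp_neg_Ioi]
    exact setIntegral_congr_fun measurableSet_Ioi fun s _ => den_even s
  rw [h1, ← integral_den]
  exact intervalIntegral.integral_Iic_add_Ioi integrable_den.integrableOn integrable_den.integrableOn

lemma stdNormalCDF_zero : stdNormalCDF 0 = 1 / 2 := by
  have := stdNormalCDF_neg 0
  rw [neg_zero] at this; linarith

/-- FTC derivative -/
lemma hasDerivAt_stdNormalCDF (t : ℝ) : HasDerivAt stdNormalCDF (den t) t := by
  have key : ∀ u : ℝ, stdNormalCDF u = stdNormalCDF 0 + ∫ s in (0:ℝ)..u, den s := by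
    intro u
    rw [stdNormalCDF_eq, stdNormalCDF_eq, ← intervalIntegral.integral_Iic_sub_Iic
      integrable_den.integrableOn integrable_den.integrableOn]
    ring
  have h : HasDerivAt (fun u => stdNormalCDF 0 + ∫ s in (0:ℝ)..u, den s) (den t) t := by
    refine HasDerivAt.const_add _ ?_
    exact intervalIntegral.integral_hasDerivAt_right
      integrable_den.intervalIntegrable
      continuous_den.stronglyMeasurable.aestronglyMeasurable.stronglyMeasurableAtFilter
      continuous_den.continuousAt
  simpa [← funext key] using h

lemma continuous_stdNormalCDF : Continuous stdNormalCDF := by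
  have : Differentiable ℝ stdNormalCDF := fun t => (hasDerivAt_stdNormalCDF t).differentiableAt
  exact this.continuous

lemma integral_gaussianReal {m : ℝ} {v : ℝ≥0} (hv : v ≠ 0) (g : ℝ → ℝ) :
    ∫ x, g x ∂(gaussianReal m v) = ∫ x, gaussianPDFReal m v x * g x := by
  rw [gaussianReal_of_var_ne_zero _ hv]
  have h : gaussianPDF m v = fun x => ((gaussianPDFReal m v x).toNNReal : ℝ≥0∞) := by
    ext x; simp [gaussianPDF, ENNReal.ofReal]
  rw [h, integral_withDensity_eq_integral_smul (measurable_gaussianPDFReal m v).real_toNNReal g]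
  refine integral_congr_ae (ae_of_all _ fun x => ?_)
  simp [NNReal.smul_def, Real.coe_toNNReal _ (gaussianPDFReal_nonneg m v x)]

lemma continuous_logisticFn : Continuous logisticFn := by
  unfold logisticFn
  apply Continuous.div continuous_const (by fun_prop)
  intro t
  positivity

lemma logisticFn_nonneg (t : ℝ) : 0 ≤ logisticFn t := by
  unfold logisticFn; positivity

lemma logisticFn_le_one (t : ℝ) : logisticFn t ≤ 1 := by
  rw [logisticFn, div_le_one (by positivity)]
  nlinarith [Real.exp_pos (-t)]

lemma abs_deltaFn_le (t : ℝ) : |deltaFn t| ≤ 2 := by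
  rw [deltaFn, abs_sub_le_iff]
  constructor <;>
    nlinarith [stdNormalCDF_nonneg t, stdNormalCDF_le_one t,
      logisticFn_nonneg (Real.sqrt (8 / Real.pi) * t), logisticFn_le_one (Real.sqrt (8 / Real.pi) * t)]

lemma bddAbove_deltaFn : BddAbove (Set.range fun t => |deltaFn t|) :=
  ⟨2, by rintro x ⟨t, rfl⟩; exact abs_deltaFn_le t⟩

lemma abs_deltaFn_le_iSup (t : ℝ) : |deltaFn t| ≤ ⨆ s : ℝ, |deltaFn s| :=
  le_ciSup bddAbove_deltaFn t

lemma continuous_deltaFn : Continuous deltaFn := by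
  unfold deltaFn
  exact continuous_stdNormalCDF.sub (continuous_logisticFn.comp (by fun_prop))

lemma integral_den_mul (k b : ℝ) :
    ∫ u, den (b + k * u) * den u
      = den (b / Real.sqrt (1 + k ^ 2)) / Real.sqrt (1 + k ^ 2) := by
  have hs2 : (0:ℝ) < 1 + k ^ 2 := by positivity
  have hss : Real.sqrt (1 + k ^ 2) ^ 2 = 1 + k ^ 2 := Real.sq_sqrt hs2.le
  have hs0 : 0 < Real.sqrt (1 + k ^ 2) := Real.sqrt_pos.mpr hs2
  have h2π : Real.sqrt (2 * π) ^ 2 = 2 * π := Real.sq_sqrt (by positivity)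
  have h2π0 : 0 < Real.sqrt (2 * π) := Real.sqrt_pos.mpr (by positivity)
  have h1 : ∀ u, den (b + k * u) * den u
      = (2 * π)⁻¹ * Real.exp (-b ^ 2 / (2 * (1 + k ^ 2)))
        * Real.exp (-((1 + k ^ 2) / 2) * (u + k * b / (1 + k ^ 2)) ^ 2) := by
    intro u
    unfold den
    rw [div_mul_div_comm, Real.mul_self_sqrt (by positivity), ← Real.exp_add,
      mul_assoc, ← Real.exp_add, div_eq_inv_mul]
    congr 1
    congr 1
    field_simp
    ring
  rw [integral_congr_ae (ae_of_all _ h1)]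
  rw [integral_const_mul, integral_add_right_eq_self
    (fun u => Real.exp (-((1 + k ^ 2) / 2) * u ^ 2)) (k * b / (1 + k ^ 2)),
    integral_gaussian]
  have hsq : Real.sqrt (π / ((1 + k ^ 2) / 2)) = Real.sqrt (2 * π) / Real.sqrt (1 + k ^ 2) := by
    rw [show π / ((1 + k ^ 2) / 2) = (2 * π) / (1 + k ^ 2) by field_simp,
      Real.sqrt_div (by positivity)]
  rw [hsq]
  unfold den
  rw [div_pow b]
  rw [hss]
  field_simp
  exact h2π

lemma den_le_one (x : ℝ) : |den x| ≤ 1 := by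
  rw [abs_of_nonneg (den_nonneg x), den, div_le_one (by positivity)]
  have h1 : Real.exp (-x ^ 2 / 2) ≤ 1 := by
    rw [Real.exp_le_one_iff]; nlinarith [sq_nonneg x]
  have h2 : (1:ℝ) ≤ Real.sqrt (2 * π) := by
    rw [show (1:ℝ) = Real.sqrt 1 by simp]
    exact Real.sqrt_le_sqrt (by nlinarith [Real.pi_gt_three])
  linarith

lemma integrable_of_bounded {ν : Measure ℝ} [IsProbabilityMeasure ν] {f : ℝ → ℝ}
    (hf : Continuous f) (C : ℝ) (hb : ∀ x, |f x| ≤ C) : Integrable f ν :=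
  (integrable_const C).mono' hf.aestronglyMeasurable (ae_of_all _ fun x => by
    simpa using hb x)

lemma integrable_cdf_comp (k b : ℝ) {ν : Measure ℝ} [IsProbabilityMeasure ν] :
    Integrable (fun u => stdNormalCDF (b + k * u)) ν :=
  integrable_of_bounded (continuous_stdNormalCDF.comp (by fun_prop)) 1 fun x =>
    abs_le.mpr ⟨by linarith [stdNormalCDF_nonneg (b + k * x)],
      stdNormalCDF_le_one (b + k * x)⟩

lemma key_identity (k b : ℝ) :
    ∫ u, stdNormalCDF (b + k * u) ∂(gaussianReal 0 1)
      = stdNormalCDF (b / Real.sqrt (1 + k ^ 2)) := by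
  set γ := gaussianReal 0 1 with hγ
  have hs2 : (0:ℝ) < 1 + k ^ 2 := by positivity
  have hs0 : 0 < Real.sqrt (1 + k ^ 2) := Real.sqrt_pos.mpr hs2
  set L : ℝ → ℝ := fun b => ∫ u, stdNormalCDF (b + k * u) ∂γ with hL
  set R : ℝ → ℝ := fun b => stdNormalCDF (b / Real.sqrt (1 + k ^ 2)) with hR
  -- derivative of L
  have hLderiv : ∀ b₀ : ℝ, HasDerivAt L (den (b₀ / Real.sqrt (1 + k ^ 2))
      / Real.sqrt (1 + k ^ 2)) b₀ := by
    intro b₀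
    have main := (hasDerivAt_integral_of_dominated_loc_of_deriv_le (μ := γ)
      (F := fun b u => stdNormalCDF (b + k * u)) (F' := fun b u => den (b + k * u))
      (x₀ := b₀) (bound := fun _ => (1:ℝ)) (s := Metric.ball b₀ 1) (Metric.ball_mem_nhds b₀ one_pos)
      (Filter.Eventually.of_forall fun b =>
        (continuous_stdNormalCDF.comp (by fun_prop)).aestronglyMeasurable)
      (integrable_cdf_comp k b₀)
      ((continuous_den.comp (by fun_prop)).aestronglyMeasurable)
      (ae_of_all _ fun u b _ => by simpa using den_le_one (b + k * u))
      (integrable_const 1)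
      (ae_of_all _ fun u b _ => by
        simpa [Function.comp_def] using (hasDerivAt_stdNormalCDF (b + k * u)).comp b
          ((hasDerivAt_id b).add_const (k * u)))).2
    have heq : ∫ u, den (b₀ + k * u) ∂γ
        = den (b₀ / Real.sqrt (1 + k ^ 2)) / Real.sqrt (1 + k ^ 2) := by
      rw [hγ, integral_gaussianReal one_ne_zero, ← integral_den_mul k b₀]
      refine integral_congr_ae (ae_of_all _ fun u => ?_)
      simp only [← den_eq_pdf]
      exact mul_comm _ _
    rwa [heq] at main
  have hRderiv : ∀ b₀ : ℝ, HasDerivAt R (den (b₀ / Real.sqrt (1 + k ^ 2))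
      / Real.sqrt (1 + k ^ 2)) b₀ := by
    intro b₀
    have := (hasDerivAt_stdNormalCDF (b₀ / Real.sqrt (1 + k ^ 2))).comp b₀
      ((hasDerivAt_id b₀).div_const (Real.sqrt (1 + k ^ 2)))
    simpa [div_eq_mul_inv, Function.comp_def, hR] using this
  -- L - R is constant
  have hconst : ∀ b₀ : ℝ, L b₀ - R b₀ = L 0 - R 0 := by
    intro b₀
    have hdiff : Differentiable ℝ (fun b => L b - R b) := fun b =>
      ((hLderiv b).sub (hRderiv b)).differentiableAt
    have hderiv0 : ∀ b : ℝ, deriv (fun b => L b - R b) b = 0 := fun b => by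
      rw [show (fun b => L b - R b) = L - R from rfl, ((hLderiv b).sub (hRderiv b)).deriv]; ring
    exact is_const_of_deriv_eq_zero hdiff hderiv0 b₀ 0
  -- L 0 = 1/2
  have hmap : γ.map (fun u => -u) = γ := by
    have h := gaussianReal_map_const_mul (μ := 0) (v := 1) (-1)
    have h2 : (fun u : ℝ => -u) = fun u : ℝ => (-1) * u := by funext u; ring
    have h3 : (.mk ((-1:ℝ)^2) (sq_nonneg _) * 1 : ℝ≥0) = 1 := by ext; norm_num
    rw [hγ, h2, h, h3, mul_zero]
  have hc : Continuous fun y : ℝ => stdNormalCDF (k * y) :=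
    continuous_stdNormalCDF.comp (continuous_const.mul continuous_id)
  have hintk : Integrable (fun u => stdNormalCDF (k * u)) γ := by
    simpa using integrable_cdf_comp (ν := γ) k 0
  have hL0 : L 0 = 1 / 2 := by
    have h1 : L 0 = ∫ u, stdNormalCDF (k * -u) ∂γ := by
      rw [hL]
      simp only [zero_add]
      conv_lhs => rw [← hmap]
      rw [integral_map measurable_neg.aemeasurable hc.aestronglyMeasurable]
    have h2 : ∀ u : ℝ, stdNormalCDF (k * -u) = 1 - stdNormalCDF (k * u) := by
      intro u
      rw [show k * -u = -(k * u) by ring, stdNormalCDF_neg]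
    have h3 : (∫ u, stdNormalCDF (k * -u) ∂γ) = 1 - ∫ u, stdNormalCDF (k * u) ∂γ := by
      rw [integral_congr_ae (ae_of_all _ h2), integral_sub (integrable_const 1) hintk,
        integral_const]
      simp
    have h4 : L 0 = ∫ u, stdNormalCDF (k * u) ∂γ := by rw [hL]; simp only [zero_add]
    rw [h4]
    linarith
  have hR0 : R 0 = 1 / 2 := by
    rw [hR]; simp [stdNormalCDF_zero]
  have hb := hconst b
  rw [hL0, hR0] at hb
  have : L b = R b := by linarith
  exact this

lemma key_identity_var (c b : ℝ) {v : ℝ≥0} (hv : v ≠ 0) :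
    ∫ w, stdNormalCDF (b + c * w) ∂(gaussianReal 0 v)
      = stdNormalCDF (b / Real.sqrt (1 + c ^ 2 * v)) := by
  have hmap : (gaussianReal 0 1).map (fun u => Real.sqrt v * u) = gaussianReal 0 v := by
    have h := gaussianReal_map_const_mul (μ := 0) (v := 1) (Real.sqrt v)
    have h3 : (.mk (Real.sqrt v ^ 2) (sq_nonneg _) * 1 : ℝ≥0) = v := by
      ext
      simp [Real.sq_sqrt v.coe_nonneg]
    rw [show ((Real.sqrt v * ·) : ℝ → ℝ) = fun u => Real.sqrt v * u from rfl] at h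
    rw [h, h3, mul_zero]
  have hc : Continuous fun w : ℝ => stdNormalCDF (b + c * w) :=
    continuous_stdNormalCDF.comp (continuous_const.add (continuous_const.mul continuous_id))
  rw [← hmap, integral_map (by fun_prop) hc.aestronglyMeasurable]
  have he : ∀ u : ℝ, b + c * (Real.sqrt v * u) = b + c * Real.sqrt v * u := fun u => by ring
  simp only [he]
  rw [key_identity (c * Real.sqrt v) b, mul_pow, Real.sq_sqrt v.coe_nonneg]

lemma main_bound (a c₂ : ℝ) {v : ℝ≥0} (hv : v ≠ 0) :
    |(∫ w, logisticFn (a + c₂ * w) ∂(gaussianReal 0 v))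
      - logisticFn (a / Real.sqrt (1 + π / 8 * (c₂ ^ 2 * v)))| ≤ 2 * ⨆ t : ℝ, |deltaFn t| := by
  set c : ℝ := Real.sqrt (π / 8) with hcdef
  have hc2 : c ^ 2 = π / 8 := Real.sq_sqrt (by positivity)
  have hcinv : Real.sqrt (8 / π) * c = 1 := by
    rw [hcdef, ← Real.sqrt_mul (by positivity), show 8 / π * (π / 8) = 1 by
      field_simp]
    exact Real.sqrt_one
  have hσΦ : ∀ t : ℝ, logisticFn t = stdNormalCDF (c * t) - deltaFn (c * t) := by
    intro t
    rw [deltaFn, ← mul_assoc, hcinv, one_mul]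
    ring
  set ν := gaussianReal 0 v with hν
  have hint1 : Integrable (fun w => stdNormalCDF (c * a + c * c₂ * w)) ν :=
    integrable_cdf_comp _ _
  have hint2 : Integrable (fun w => deltaFn (c * (a + c₂ * w))) ν :=
    integrable_of_bounded (continuous_deltaFn.comp (by fun_prop)) 2 fun x => abs_deltaFn_le _
  set s : ℝ := Real.sqrt (1 + π / 8 * (c₂ ^ 2 * v)) with hsdef
  have hsplit : (∫ w, logisticFn (a + c₂ * w) ∂ν)
      = stdNormalCDF (c * a / s) - ∫ w, deltaFn (c * (a + c₂ * w)) ∂ν := by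
    have hpt : ∀ w, logisticFn (a + c₂ * w)
        = stdNormalCDF (c * a + c * c₂ * w) - deltaFn (c * (a + c₂ * w)) := by
      intro w
      rw [hσΦ (a + c₂ * w), show c * (a + c₂ * w) = c * a + c * c₂ * w by ring]
    rw [integral_congr_ae (ae_of_all _ hpt), integral_sub hint1 hint2,
      key_identity_var (c * c₂) (c * a) hv]
    rw [mul_pow, hc2, show (1 : ℝ) + π / 8 * c₂ ^ 2 * ↑v = 1 + π / 8 * (c₂ ^ 2 * ↑v) by ring,
      hsdef]
  have hΦσ : stdNormalCDF (c * a / s) = logisticFn (a / s) + deltaFn (c * a / s) := by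
    rw [deltaFn, show c * a / s = c * (a / s) by ring, ← mul_assoc, hcinv, one_mul]
    ring
  rw [hsplit, hΦσ]
  have hbound : |∫ w, deltaFn (c * (a + c₂ * w)) ∂ν| ≤ ⨆ t : ℝ, |deltaFn t| := by
    have h := norm_integral_le_of_norm_le_const (μ := ν)
      (C := ⨆ t : ℝ, |deltaFn t|) (f := fun w => deltaFn (c * (a + c₂ * w)))
      (ae_of_all _ fun w => by
        simpa [Real.norm_eq_abs] using abs_deltaFn_le_iSup (c * (a + c₂ * w)))
    simpa [Real.norm_eq_abs] using h
  have h2 := abs_deltaFn_le_iSup (c * a / s)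
  have habs : |logisticFn (a / s) + deltaFn (c * a / s)
      - (∫ w, deltaFn (c * (a + c₂ * w)) ∂ν) - logisticFn (a / s)|
      = |deltaFn (c * a / s) - ∫ w, deltaFn (c * (a + c₂ * w)) ∂ν| := by
    congr 1; ring
  rw [habs]
  calc |deltaFn (c * a / s) - ∫ w, deltaFn (c * (a + c₂ * w)) ∂ν|
      ≤ |deltaFn (c * a / s)| + |∫ w, deltaFn (c * (a + c₂ * w)) ∂ν| := abs_sub _ _
    _ ≤ 2 * ⨆ t : ℝ, |deltaFn t| := by linarith

lemma condexp_indepFun_comp {Ω : Type*} [MeasurableSpace Ω] (P : Measure Ω)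
    [IsProbabilityMeasure P] (X Y : Ω → ℝ) (hX : Measurable X) (hY : Measurable Y)
    (hindep : IndepFun X Y P) (φ : ℝ → ℝ → ℝ)
    (hφ : Continuous fun p : ℝ × ℝ => φ p.1 p.2) (hbdd : ∀ x y, |φ x y| ≤ 1) :
    (fun ω => ∫ y, φ (X ω) y ∂(P.map Y))
      =ᵐ[P] P[fun ω => φ (X ω) (Y ω) | MeasurableSpace.comap X inferInstance] := by
  have hm : MeasurableSpace.comap X inferInstance ≤ ‹MeasurableSpace Ω› := hX.comap_le
  haveI : SigmaFinite (P.trim hm) := by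
    haveI := isFiniteMeasure_trim (μ := P) hm
    infer_instance
  haveI hPY : IsProbabilityMeasure (P.map Y) := Measure.isProbabilityMeasure_map hY.aemeasurable
  haveI hPX : IsProbabilityMeasure (P.map X) := Measure.isProbabilityMeasure_map hX.aemeasurable
  set g : ℝ → ℝ := fun x => ∫ y, φ x y ∂(P.map Y) with hgdef
  have hg : StronglyMeasurable g :=
    hφ.stronglyMeasurable.integral_prod_right'
  have hgbdd : ∀ x, |g x| ≤ 1 := by
    intro x
    have h := norm_integral_le_of_norm_le_const (μ := P.map Y) (C := 1)
      (f := fun y => φ x y) (ae_of_all _ fun y => by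
        simpa [Real.norm_eq_abs] using hbdd x y)
    simpa [Real.norm_eq_abs] using h
  have hfm : AEStronglyMeasurable (fun ω => φ (X ω) (Y ω)) P :=
    (hφ.measurable.comp (hX.prodMk hY)).aestronglyMeasurable
  have hfint : Integrable (fun ω => φ (X ω) (Y ω)) P :=
    (integrable_const 1).mono' hfm (ae_of_all _ fun ω => by
      simpa [Real.norm_eq_abs] using hbdd (X ω) (Y ω))
  have hgXint : Integrable (fun ω => g (X ω)) P :=
    (integrable_const 1).mono' ((hg.measurable.comp hX).aestronglyMeasurable)
      (ae_of_all _ fun ω => by simpa [Real.norm_eq_abs] using hgbdd (X ω))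
  refine ae_eq_condExp_of_forall_setIntegral_eq hm hfint
    (fun s _ _ => hgXint.integrableOn) (fun s hs _ => ?_) ?_
  · obtain ⟨A, hA, rfl⟩ := hs
    have hXY : P.map (fun ω => (X ω, Y ω)) = (P.map X).prod (P.map Y) :=
      (indepFun_iff_map_prod_eq_prod_map_map hX.aemeasurable hY.aemeasurable).mp hindep
    have hφint : Integrable (fun p : ℝ × ℝ => φ p.1 p.2) ((P.map X).prod (P.map Y)) :=
      (integrable_const 1).mono' hφ.aestronglyMeasurable
        (ae_of_all _ fun p => by simpa [Real.norm_eq_abs] using hbdd p.1 p.2)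
    have hleft : ∫ ω in X ⁻¹' A, g (X ω) ∂P = ∫ x in A, g x ∂(P.map X) :=
      (setIntegral_map hA hg.aestronglyMeasurable hX.aemeasurable).symm
    have hpre : X ⁻¹' A = (fun ω => (X ω, Y ω)) ⁻¹' (A ×ˢ Set.univ) := by
      ext ω; simp
    have hright : ∫ ω in X ⁻¹' A, φ (X ω) (Y ω) ∂P = ∫ x in A, g x ∂(P.map X) := by
      rw [hpre, ← setIntegral_map (hA.prod MeasurableSet.univ) hφ.aestronglyMeasurable
        (hX.prodMk hY).aemeasurable, hXY,
        setIntegral_prod _ hφint.integrableOn]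
      simp only [Measure.restrict_univ]
      rfl
    rw [hleft, hright]
  · exact (hg.comp_measurable (Measurable.of_comap_le le_rfl)).aestronglyMeasurable

end Helpers

open Helpers

/-- Two-dimensional instance of Theorem 2: with `X₁ ~ N(μ₁, σ₁²)`, `σ₁ > 0`,
`W ~ N(0, (1−ρ²)σ₂²)` independent of `X₁`, and `X₂ = μ₂ + ρ (σ₂/σ₁)(X₁ − μ₁) + W`
(so that `(X₁, X₂)` is bivariate Gaussian with correlation `ρ`), for all `β₀ β₁ β₂` a.s.
`|E[σ(β₀ + β₁X₁ + β₂X₂)|σ(X₁)] − σ((α₀ + α₁X₁)/√(1 + (π/8)β₂²(1−ρ²)σ₂²))| ≤ 2‖δ‖_∞`,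
where `α₀ = β₀ + β₂μ₂ − β₂ρ(σ₂/σ₁)μ₁` and `α₁ = β₁ + β₂ρσ₂/σ₁`. -/
theorem logistic_condexp_bivariate_bound {Ω : Type*} [MeasurableSpace Ω]
    (P : Measure Ω) [IsProbabilityMeasure P]
    (X₁ W : Ω → ℝ) (hX₁ : Measurable X₁) (hW : Measurable W)
    (μ₁ μ₂ σ₁ σ₂ ρ : ℝ) (hσ₁ : 0 < σ₁) (hσ₂ : 0 ≤ σ₂)
    (hρ : ρ ∈ Set.Icc (-1 : ℝ) 1)
    (v₁ : ℝ≥0) (hv₁ : (v₁ : ℝ) = σ₁ ^ 2)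
    (hX₁dist : P.map X₁ = gaussianReal μ₁ v₁)
    (hindep : IndepFun X₁ W P)
    (vW : ℝ≥0) (hvW : (vW : ℝ) = (1 - ρ ^ 2) * σ₂ ^ 2) (hvWpos : 0 < vW)
    (hWdist : P.map W = gaussianReal 0 vW)
    (X₂ : Ω → ℝ) (hX₂ : ∀ ω, X₂ ω = μ₂ + ρ * (σ₂ / σ₁) * (X₁ ω - μ₁) + W ω)
    (β₀ β₁ β₂ : ℝ) :
    ∀ᵐ ω ∂P,
      |(P[fun ω => logisticFn (β₀ + β₁ * X₁ ω + β₂ * X₂ ω) |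
            MeasurableSpace.comap X₁ inferInstance]) ω -
          logisticFn (((β₀ + β₂ * μ₂ - β₂ * ρ * (σ₂ / σ₁) * μ₁)
              + (β₁ + β₂ * ρ * σ₂ / σ₁) * X₁ ω) /
            Real.sqrt (1 + (Real.pi / 8) * (β₂ ^ 2 * (1 - ρ ^ 2) * σ₂ ^ 2)))| ≤
        2 * ⨆ t : ℝ, |deltaFn t| := by
  have hvW0 : vW ≠ 0 := hvWpos.ne'
  set α₀ : ℝ := β₀ + β₂ * μ₂ - β₂ * ρ * (σ₂ / σ₁) * μ₁ with hα₀
  set α₁ : ℝ := β₁ + β₂ * ρ * σ₂ / σ₁ with hα₁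
  set φ : ℝ → ℝ → ℝ := fun x y => logisticFn (α₀ + α₁ * x + β₂ * y) with hφdef
  have hφcont : Continuous fun p : ℝ × ℝ => φ p.1 p.2 := by
    apply continuous_logisticFn.comp
    fun_prop
  have hφbdd : ∀ x y, |φ x y| ≤ 1 := fun x y =>
    abs_le.mpr ⟨by linarith [logisticFn_nonneg (α₀ + α₁ * x + β₂ * y)],
      logisticFn_le_one (α₀ + α₁ * x + β₂ * y)⟩
  have hfeq : (fun ω => logisticFn (β₀ + β₁ * X₁ ω + β₂ * X₂ ω))
      = fun ω => φ (X₁ ω) (W ω) := by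
    funext ω
    rw [hφdef, hX₂ ω, hα₀, hα₁]
    congr 1
    field_simp
    ring
  have hce := condexp_indepFun_comp P X₁ W hX₁ hW hindep φ hφcont hφbdd
  rw [hfeq]
  filter_upwards [hce] with ω hω
  rw [← hω, hWdist]
  have hmb := main_bound (α₀ + α₁ * X₁ ω) β₂ (v := vW) hvW0
  have harg : (1 : ℝ) + π / 8 * (β₂ ^ 2 * vW)
      = 1 + π / 8 * (β₂ ^ 2 * (1 - ρ ^ 2) * σ₂ ^ 2) := by
    rw [hvW]; ring
  rw [harg] at hmb
  exact hmb
end
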